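/- Let p ≥ 2, let ξ, ν ∈ ℝ^p be unit vectors with ξᵀν = 0, let a > 1, η > 0 and 0 < ε < 1/2, and set Σ = a ξξᵀ + (I_p − ξξᵀ) and Σ_ε^{cdm} = ((1−2ε)Σ + 2εη ννᵀ) Σ. Then Σ_ε^{cdm} = (1−2ε)a² ξξᵀ + (1−2ε+2εη) ννᵀ + (1−2ε)(I_p − ξξᵀ − ννᵀ). Moreover, if η > ((1−2ε)/(2ε))(a²−1), then ν is the leading eigenvector of Σ_ε^{cdm}: for every unit vector w ∈ ℝ^p with νᵀw = 0 one has wᵀ Σ_ε^{cdm} w < νᵀ Σ_ε^{cdm} ν = 1−2ε+2εη. -/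

import Mathlib

open Matrix

lemma vmv_mul {p : ℕ} (x y u v : Fin p → ℝ) :
    vecMulVec x y * vecMulVec u v = (y ⬝ᵥ u) • vecMulVec x v := by
  ext i j
  simp only [mul_apply, vecMulVec_apply, Matrix.smul_apply, smul_eq_mul, dotProduct,
    Finset.sum_mul]
  exact Finset.sum_congr rfl fun k _ => by ring

lemma vmv_mulVec {p : ℕ} (x y w : Fin p → ℝ) :
    (vecMulVec x y).mulVec w = (y ⬝ᵥ w) • x := by
  ext i
  simp only [mulVec, vecMulVec_apply, dotProduct, Pi.smul_apply, smul_eq_mul,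
    Finset.sum_mul]
  exact Finset.sum_congr rfl fun k _ => by ring

/-- Example 2 (CDM-PCA): the contaminated product covariance
`Σ_ε^{cdm} = ((1-2ε)Σ + 2εη ννᵀ) Σ` decomposes as
`(1-2ε)a² ξξᵀ + (1-2ε+2εη) ννᵀ + (1-2ε)(I - ξξᵀ - ννᵀ)`, and whenever
`η > ((1-2ε)/(2ε))(a²-1)`, `ν` is the leading eigenvector. -/
theorem stmt1 (p : ℕ) (hp : 2 ≤ p) (ξ ν : Fin p → ℝ)
    (hξ : ξ ⬝ᵥ ξ = 1) (hν : ν ⬝ᵥ ν = 1) (hξν : ξ ⬝ᵥ ν = 0)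
    (a η ε : ℝ) (ha : 1 < a) (hη : 0 < η) (hε0 : 0 < ε) (hε1 : ε < 1 / 2)
    (Sig Scdm : Matrix (Fin p) (Fin p) ℝ)
    (hSig : Sig = a • vecMulVec ξ ξ + (1 - vecMulVec ξ ξ))
    (hScdm : Scdm = ((1 - 2 * ε) • Sig + (2 * ε * η) • vecMulVec ν ν) * Sig) :
    Scdm = ((1 - 2 * ε) * a ^ 2) • vecMulVec ξ ξ +
        (1 - 2 * ε + 2 * ε * η) • vecMulVec ν ν +
        (1 - 2 * ε) • (1 - vecMulVec ξ ξ - vecMulVec ν ν) ∧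
    (η > (1 - 2 * ε) / (2 * ε) * (a ^ 2 - 1) →
      ν ⬝ᵥ Scdm.mulVec ν = 1 - 2 * ε + 2 * ε * η ∧
      ∀ w : Fin p → ℝ, w ⬝ᵥ w = 1 → ν ⬝ᵥ w = 0 →
        w ⬝ᵥ Scdm.mulVec w < 1 - 2 * ε + 2 * ε * η) := by
  have hνξ : ν ⬝ᵥ ξ = 0 := by rwa [dotProduct_comm]
  have hKK : vecMulVec ξ ξ * vecMulVec ξ ξ = vecMulVec ξ ξ := by
    rw [vmv_mul, hξ, one_smul]
  have hNK : vecMulVec ν ν * vecMulVec ξ ξ = 0 := by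
    rw [vmv_mul, hνξ, zero_smul]
  have hdec : Scdm = ((1 - 2 * ε) * a ^ 2) • vecMulVec ξ ξ +
      (1 - 2 * ε + 2 * ε * η) • vecMulVec ν ν +
      (1 - 2 * ε) • (1 - vecMulVec ξ ξ - vecMulVec ν ν) := by
    subst hSig hScdm
    simp only [add_mul, mul_add, smul_mul_assoc, mul_smul_comm, sub_mul,
      mul_sub, one_mul, mul_one, smul_add, smul_sub, smul_smul, hKK, hNK,
      smul_zero, sub_zero]
    module
  refine ⟨hdec, fun hη' => ?_⟩
  have hquad : ∀ w : Fin p → ℝ, w ⬝ᵥ Scdm.mulVec w =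
      (1 - 2 * ε) * a ^ 2 * (ξ ⬝ᵥ w) ^ 2 + (1 - 2 * ε + 2 * ε * η) * (ν ⬝ᵥ w) ^ 2 +
      (1 - 2 * ε) * (w ⬝ᵥ w - (ξ ⬝ᵥ w) ^ 2 - (ν ⬝ᵥ w) ^ 2) := by
    intro w
    rw [hdec]
    simp only [add_mulVec, smul_mulVec, sub_mulVec, one_mulVec, vmv_mulVec,
      dotProduct_add, dotProduct_smul, dotProduct_sub, smul_eq_mul]
    rw [dotProduct_comm w ξ, dotProduct_comm w ν]; ring
  constructor
  · rw [hquad ν, hξν, hν]; ring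
  · intro w hw hνw
    rw [hquad w, hνw, hw]
    have hcs : (ξ ⬝ᵥ w) ^ 2 ≤ 1 := by
      have h : (ξ ⬝ᵥ w) ^ 2 ≤ (ξ ⬝ᵥ ξ) * (w ⬝ᵥ w) := by
        simpa [dotProduct, sq] using Finset.sum_mul_sq_le_sq_mul_sq Finset.univ ξ w
      rw [hξ, hw] at h; linarith
    have hsq : 0 ≤ (ξ ⬝ᵥ w) ^ 2 := sq_nonneg _
    have h2ε : (0:ℝ) < 2 * ε := by linarith
    have key : (1 - 2 * ε) * (a ^ 2 - 1) < 2 * ε * η := by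
      rw [gt_iff_lt, div_mul_eq_mul_div, div_lt_iff₀ h2ε] at hη'
      linarith
    have h1ε : (0:ℝ) ≤ 1 - 2 * ε := by linarith
    have ha2 : (0:ℝ) ≤ a ^ 2 - 1 := by nlinarith
    nlinarith [mul_nonneg (mul_nonneg h1ε ha2) (sub_nonneg.mpr hcs)]
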